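/- Teleportation correctness: starting from |Ψ⟩ = (a₀|0⟩+a₁|1⟩) ⊗ (1/√2)(|0,0⟩+|1,1⟩) with |a₀|²+|a₁|²=1, applying XOR^(1,1)⊗Id, then Hadamard⊗Id⊗Id, the resulting state equals (1/2)[ |0,0⟩⊗(a₀|0⟩+a₁|1⟩) + |0,1⟩⊗(a₀|1⟩+a₁|0⟩) + |1,0⟩⊗(a₀|0⟩−a₁|1⟩) + |1,1⟩⊗(a₀|1⟩−a₁|0⟩) ]; consequently, applying the correction Id, NOT, Z, NOT∘Z respectively to the third qubit in each branch recovers a₀|0⟩+a₁|1⟩. -/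

import Mathlib

open scoped Matrix

/-- NOT gate on ℂ². -/
noncomputable def NOTm : Matrix (Fin 2) (Fin 2) ℂ := !![0, 1; 1, 0]
/-- Pauli Z. -/
noncomputable def Zm : Matrix (Fin 2) (Fin 2) ℂ := !![1, 0; 0, -1]
/-- Hadamard gate on ℂ². -/
noncomputable def Hm : Matrix (Fin 2) (Fin 2) ℂ :=
  (1 / (Real.sqrt 2 : ℂ)) • !![1, 1; 1, -1]

/-- XOR^(1,1) ⊗ Id on (ℂ²)^⊗3: |x,y,z⟩ ↦ |x, x+̂y, z⟩. -/
noncomputable def xor3 :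
    Matrix (Fin 2 × Fin 2 × Fin 2) (Fin 2 × Fin 2 × Fin 2) ℂ :=
  Matrix.of fun i j => if i = (j.1, j.1 + j.2.1, j.2.2) then 1 else 0

/-- Hadamard ⊗ Id ⊗ Id on (ℂ²)^⊗3. -/
noncomputable def had3 :
    Matrix (Fin 2 × Fin 2 × Fin 2) (Fin 2 × Fin 2 × Fin 2) ℂ :=
  Matrix.of fun i j => if i.2 = j.2 then Hm i.1 j.1 else 0

/-- The initial teleportation state (a₀|0⟩+a₁|1⟩) ⊗ (1/√2)(|0,0⟩+|1,1⟩). -/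
noncomputable def teleInit (a₀ a₁ : ℂ) : Fin 2 × Fin 2 × Fin 2 → ℂ :=
  fun p => (if p.1 = 0 then a₀ else a₁) *
    (if p.2.1 = p.2.2 then ((1 / Real.sqrt 2 : ℝ) : ℂ) else 0)

/-- The four-branch state
(1/2)[|0,0⟩⊗(a₀|0⟩+a₁|1⟩) + |0,1⟩⊗(a₀|1⟩+a₁|0⟩) + |1,0⟩⊗(a₀|0⟩−a₁|1⟩)
      + |1,1⟩⊗(a₀|1⟩−a₁|0⟩)]. -/
noncomputable def teleFinal (a₀ a₁ : ℂ) : Fin 2 × Fin 2 × Fin 2 → ℂ :=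
  fun p => (1 / 2 : ℂ) *
    (if p.1 = 0 then
      (if p.2.1 = 0 then ![a₀, a₁] p.2.2 else ![a₁, a₀] p.2.2)
     else
      (if p.2.1 = 0 then ![a₀, -a₁] p.2.2 else ![-a₁, a₀] p.2.2))

/-- Teleportation correctness: applying XOR⊗Id then Hadamard⊗Id⊗Id to
(a₀|0⟩+a₁|1⟩)⊗(1/√2)(|0,0⟩+|1,1⟩) yields the four-branch state, and applying
the corrections Id, NOT, Z and NOT∘Z (i.e. NOT followed by Z) to the third qubit
of the respective branches recovers a₀|0⟩+a₁|1⟩. -/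
theorem teleportation_correct (a₀ a₁ : ℂ) (hnorm : ‖a₀‖ ^ 2 + ‖a₁‖ ^ 2 = 1) :
    (had3 * xor3).mulVec (teleInit a₀ a₁) = teleFinal a₀ a₁ ∧
    (1 : Matrix (Fin 2) (Fin 2) ℂ).mulVec ![a₀, a₁] = ![a₀, a₁] ∧
    NOTm.mulVec ![a₁, a₀] = ![a₀, a₁] ∧
    Zm.mulVec ![a₀, -a₁] = ![a₀, a₁] ∧
    Zm.mulVec (NOTm.mulVec ![-a₁, a₀]) = ![a₀, a₁] := by
  have h2 : ((Real.sqrt 2 : ℝ) : ℂ) * ((Real.sqrt 2 : ℝ) : ℂ) = 2 := by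
    norm_cast
    exact Real.mul_self_sqrt (by norm_num)
  have hs : ((Real.sqrt 2 : ℝ) : ℂ) ≠ 0 := by
    intro h
    rw [h, zero_mul] at h2
    norm_num at h2
  refine ⟨?_, ?_, ?_, ?_, ?_⟩
  · funext p
    obtain ⟨x, y, z⟩ := p
    fin_cases x <;> fin_cases y <;> fin_cases z <;>
      simp [Matrix.mulVec, Matrix.mul_apply, dotProduct,
        Fintype.sum_prod_type, Fin.sum_univ_two, had3, xor3, teleInit,
        teleFinal, Hm, Prod.ext_iff, Fin.ext_iff, -Fin.val_eq_zero_iff] <;>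
      field_simp <;>
      (rw [sq, h2]; ring)
  all_goals
    funext i
    fin_cases i <;>
      simp [Matrix.mulVec, dotProduct, Fin.sum_univ_two, NOTm, Zm,
        Matrix.one_apply]
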